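/- arXiv:2512.12010 — 4 statements merged into one kernel-verified Lean document; each statement's English description precedes it below -/
import Mathlib

section
/- Let $A$ and $B$ be $n \times n$ complex matrices. Suppose every square submatrix of $A$ of size $p$ (formed by choosing any $p$ rows and any $p$ columns) has determinant of absolute value at most $\gamma_1^{2p}$, and every square submatrix of $B$ of size $p$ has determinant of absolute value at most $\gamma_2^{2p}$. Then $|\det(A+B)| \le (\gamma_1 + \gamma_2)^{2n}$. -/
open Finset Matrix

lemma det_add_expand {n : ℕ} (M N : Matrix (Fin n) (Fin n) ℂ) :
    (M + N).det = ∑ S : Finset (Fin n),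
      (Matrix.of fun i j => if i ∈ S then M i j else N i j).det := by
  have h := (Matrix.detRowAlternating (R := ℂ) (n := Fin n)).toMultilinearMap.map_add_univ M N
  convert h using 2 with S
  show Matrix.det _ = Matrix.det (S.piecewise M N)
  congr 1
  ext i j
  by_cases hi : i ∈ S <;> simp [Finset.piecewise, hi]
  rfl

lemma abs_det_mixed {n : ℕ} (γ₁ γ₂ : ℝ) (hγ₁ : 0 ≤ γ₁) (hγ₂ : 0 ≤ γ₂)
    (A B : Matrix (Fin n) (Fin n) ℂ)
    (hA : ∀ (p : ℕ) (f g : Fin p → Fin n), Function.Injective f → Function.Injective g →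
      ‖(A.submatrix f g).det‖ ≤ γ₁ ^ (2 * p))
    (hB : ∀ (p : ℕ) (f g : Fin p → Fin n), Function.Injective f → Function.Injective g →
      ‖(B.submatrix f g).det‖ ≤ γ₂ ^ (2 * p))
    (S T : Finset (Fin n)) :
    ‖(Matrix.of fun i j => if j ∈ T then (if i ∈ S then A i j else 0)
        else (if i ∈ S then 0 else B i j) : Matrix (Fin n) (Fin n) ℂ).det‖ ≤
      if S.card = T.card then γ₁ ^ (2 * S.card) * γ₂ ^ (2 * (n - S.card)) else 0 := by
  set M : Matrix (Fin n) (Fin n) ℂ := Matrix.of fun i j => if j ∈ T then (if i ∈ S then A i j else 0)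
        else (if i ∈ S then 0 else B i j) with hM
  by_cases hcard : S.card = T.card
  · rw [if_pos hcard]
    set p := S.card with hp
    have hT : T.card = p := hcard.symm
    have hSc : Sᶜ.card = n - p := by rw [Finset.card_compl, Fintype.card_fin, hp]
    have hTc : Tᶜ.card = n - p := by rw [Finset.card_compl, Fintype.card_fin, hT]
    let fS : Fin p → Fin n := fun a => ↑(S.orderIsoOfFin hp.symm a)
    let fS' : Fin (n - p) → Fin n := fun a => ↑(Sᶜ.orderIsoOfFin hSc a)
    let gT : Fin p → Fin n := fun a => ↑(T.orderIsoOfFin hT a)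
    let gT' : Fin (n - p) → Fin n := fun a => ↑(Tᶜ.orderIsoOfFin hTc a)
    have hfS : ∀ a, fS a ∈ S := fun a => (S.orderIsoOfFin hp.symm a).2
    have hfS' : ∀ a, fS' a ∉ S := fun a => Finset.mem_compl.mp (Sᶜ.orderIsoOfFin hSc a).2
    have hgT : ∀ a, gT a ∈ T := fun a => (T.orderIsoOfFin hT a).2
    have hgT' : ∀ a, gT' a ∉ T := fun a => Finset.mem_compl.mp (Tᶜ.orderIsoOfFin hTc a).2
    have hfSi : Function.Injective fS := fun x y hxy =>
      (S.orderIsoOfFin hp.symm).injective (Subtype.coe_injective hxy)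
    have hfS'i : Function.Injective fS' := fun x y hxy =>
      (Sᶜ.orderIsoOfFin hSc).injective (Subtype.coe_injective hxy)
    have hgTi : Function.Injective gT := fun x y hxy =>
      (T.orderIsoOfFin hT).injective (Subtype.coe_injective hxy)
    have hgT'i : Function.Injective gT' := fun x y hxy =>
      (Tᶜ.orderIsoOfFin hTc).injective (Subtype.coe_injective hxy)
    let eR : Fin p ⊕ Fin (n - p) ≃ Fin n :=
      (Equiv.sumCongr (S.orderIsoOfFin hp.symm).toEquiv
        (((Sᶜ).orderIsoOfFin hSc).toEquiv.trans
          (Equiv.subtypeEquivRight (fun x => Finset.mem_compl)))).trans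
        (Equiv.sumCompl (· ∈ S))
    let eC : Fin p ⊕ Fin (n - p) ≃ Fin n :=
      (Equiv.sumCongr (T.orderIsoOfFin hT).toEquiv
        (((Tᶜ).orderIsoOfFin hTc).toEquiv.trans
          (Equiv.subtypeEquivRight (fun x => Finset.mem_compl)))).trans
        (Equiv.sumCompl (· ∈ T))
    have heR1 : ∀ a, eR (Sum.inl a) = fS a := fun a => rfl
    have heR2 : ∀ a, eR (Sum.inr a) = fS' a := fun a => rfl
    have heC1 : ∀ a, eC (Sum.inl a) = gT a := fun a => rfl
    have heC2 : ∀ a, eC (Sum.inr a) = gT' a := fun a => rfl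
    have hblock : M.submatrix eR eC =
        Matrix.fromBlocks (A.submatrix fS gT) 0 0 (B.submatrix fS' gT') := by
      ext i j
      rcases i with a | a <;> rcases j with b | b <;>
        simp [Matrix.submatrix_apply, heR1, heR2, heC1, heC2, hM,
          hfS, hfS', hgT, hgT']
    have habs : ‖M.det‖ = ‖(M.submatrix eR eC).det‖ := by
      have hee : eC = eR.trans (eR.symm.trans eC) := by ext x; simp
      rw [hee]
      show ‖M.det‖ =
        ‖((M.submatrix id ⇑(eR.symm.trans eC)).submatrix ⇑eR ⇑eR).det‖
      rw [Matrix.det_submatrix_equiv_self, Matrix.det_permute', norm_mul]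
      rcases Int.units_eq_one_or (Equiv.Perm.sign (eR.symm.trans eC)) with h | h <;>
        simp [h]
    rw [habs, hblock, Matrix.det_fromBlocks_zero₂₁, norm_mul]
    exact mul_le_mul (hA p fS gT hfSi hgTi) (hB (n - p) fS' gT' hfS'i hgT'i)
      (norm_nonneg _) (pow_nonneg hγ₁ _)
  · -- determinant vanishes
    rw [if_neg hcard]
    have hdet : M.det = 0 := by
      rw [Matrix.det_apply']
      refine Finset.sum_eq_zero fun σ _ => ?_
      suffices h : ∏ i, M (σ i) i = 0 by rw [h, mul_zero]
      by_contra hne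
      have hne' := Finset.prod_ne_zero_iff.mp hne
      have hiff : ∀ i, i ∈ T ↔ σ i ∈ S := by
        intro i
        have := hne' i (Finset.mem_univ i)
        by_cases hiT : i ∈ T <;> by_cases hiS : σ i ∈ S <;>
          simp [hM, hiT, hiS] at this ⊢
      have : T = S.image σ.symm := by
        ext i
        simp only [Finset.mem_image]
        constructor
        · intro hi
          exact ⟨σ i, (hiff i).1 hi, σ.symm_apply_apply i⟩
        · rintro ⟨a, ha, rfl⟩
          rw [hiff, σ.apply_symm_apply]
          exact ha
      rw [this, Finset.card_image_of_injective _ σ.symm.injective] at hcard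
      exact hcard rfl
    rw [hdet]
    simp

lemma card_filter_card_eq {n : ℕ} (p : ℕ) :
    (Finset.univ.filter fun T : Finset (Fin n) => T.card = p).card = n.choose p := by
  rw [← Finset.powerset_univ, ← Finset.powersetCard_eq_filter, Finset.card_powersetCard,
    Finset.card_univ, Fintype.card_fin]

/-- If every `p × p` submatrix of `A` has determinant of absolute value at most `γ₁ ^ (2p)`,
and every `p × p` submatrix of `B` has determinant of absolute value at most `γ₂ ^ (2p)`,
then `|det (A + B)| ≤ (γ₁ + γ₂) ^ (2n)`. -/
theorem det_add_le_of_submatrix_det_bound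
    (n : ℕ) (hn : 0 < n) (γ₁ γ₂ : ℝ) (hγ₁ : 0 ≤ γ₁) (hγ₂ : 0 ≤ γ₂)
    (A B : Matrix (Fin n) (Fin n) ℂ)
    (hA : ∀ (p : ℕ) (f g : Fin p → Fin n), Function.Injective f → Function.Injective g →
      ‖(A.submatrix f g).det‖ ≤ γ₁ ^ (2 * p))
    (hB : ∀ (p : ℕ) (f g : Fin p → Fin n), Function.Injective f → Function.Injective g →
      ‖(B.submatrix f g).det‖ ≤ γ₂ ^ (2 * p)) :
    ‖(A + B).det‖ ≤ (γ₁ + γ₂) ^ (2 * n) := by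
  -- Step 2: bound for each row-mixture
  have h2 : ∀ S : Finset (Fin n),
      ‖(Matrix.of fun i j => if i ∈ S then A i j else B i j
          : Matrix (Fin n) (Fin n) ℂ).det‖
        ≤ (n.choose S.card : ℝ) * (γ₁ ^ (2 * S.card) * γ₂ ^ (2 * (n - S.card))) := by
    intro S
    have e1 : (Matrix.of fun i j => if i ∈ S then A i j else B i j
          : Matrix (Fin n) (Fin n) ℂ).det
        = ∑ T : Finset (Fin n),
          (Matrix.of fun i j => if j ∈ T then (if i ∈ S then A i j else 0)
            else (if i ∈ S then 0 else B i j) : Matrix (Fin n) (Fin n) ℂ).det := by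
      have h := det_add_expand
        ((Matrix.of fun i j => if i ∈ S then A i j else 0 : Matrix (Fin n) (Fin n) ℂ)ᵀ)
        ((Matrix.of fun i j => if i ∈ S then 0 else B i j : Matrix (Fin n) (Fin n) ℂ)ᵀ)
      rw [← Matrix.transpose_add] at h
      rw [Matrix.det_transpose] at h
      calc (Matrix.of fun i j => if i ∈ S then A i j else B i j
            : Matrix (Fin n) (Fin n) ℂ).det
          = ((Matrix.of fun i j => if i ∈ S then A i j else 0 : Matrix (Fin n) (Fin n) ℂ)
            + Matrix.of fun i j => if i ∈ S then 0 else B i j).det := by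
            congr 1; ext i j; by_cases hi : i ∈ S <;> simp [hi]
        _ = _ := h.trans (Finset.sum_congr rfl fun T _ => by
            rw [← Matrix.det_transpose]
            congr 1
            all_goals (ext i j; simp))
    rw [e1]
    calc ‖∑ T : Finset (Fin n), _‖
        ≤ ∑ T : Finset (Fin n), ‖
            ((Matrix.of fun i j => if j ∈ T then (if i ∈ S then A i j else 0)
              else (if i ∈ S then 0 else B i j) : Matrix (Fin n) (Fin n) ℂ).det)‖ :=
          norm_sum_le _ _
      _ ≤ ∑ T : Finset (Fin n), (if S.card = T.card then
            γ₁ ^ (2 * S.card) * γ₂ ^ (2 * (n - S.card)) else 0) :=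
          Finset.sum_le_sum fun T _ => abs_det_mixed γ₁ γ₂ hγ₁ hγ₂ A B hA hB S T
      _ = (n.choose S.card : ℝ) * (γ₁ ^ (2 * S.card) * γ₂ ^ (2 * (n - S.card))) := by
          have hc : (Finset.univ.filter fun T : Finset (Fin n) => S.card = T.card).card
              = n.choose S.card := by
            have hfil : (Finset.univ.filter fun T : Finset (Fin n) => S.card = T.card)
                = Finset.univ.filter fun T : Finset (Fin n) => T.card = S.card :=
              Finset.filter_congr fun T _ => eq_comm
            rw [hfil]
            exact card_filter_card_eq _
          rw [Finset.sum_ite, Finset.sum_const_zero, add_zero, Finset.sum_const, hc,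
            nsmul_eq_mul]
  -- Step 1 + combine
  have h1 : ‖(A + B).det‖
      ≤ ∑ S : Finset (Fin n),
          (n.choose S.card : ℝ) * (γ₁ ^ (2 * S.card) * γ₂ ^ (2 * (n - S.card))) := by
    rw [det_add_expand]
    exact (norm_sum_le _ _).trans (Finset.sum_le_sum fun S _ => h2 S)
  refine h1.trans ?_
  have hgroup : (∑ S : Finset (Fin n),
        (n.choose S.card : ℝ) * (γ₁ ^ (2 * S.card) * γ₂ ^ (2 * (n - S.card))))
      = ∑ p ∈ Finset.range (n + 1),
          (n.choose p : ℝ) * ((n.choose p : ℝ) * (γ₁ ^ (2 * p) * γ₂ ^ (2 * (n - p)))) := by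
    rw [← Finset.sum_fiberwise_of_maps_to (t := Finset.range (n + 1))
      (g := fun S : Finset (Fin n) => S.card)
      (fun S _ => Finset.mem_range.mpr (Nat.lt_succ_of_le (by
        simpa using Finset.card_le_univ S)))
      (fun S : Finset (Fin n) =>
        (n.choose S.card : ℝ) * (γ₁ ^ (2 * S.card) * γ₂ ^ (2 * (n - S.card))))]
    refine Finset.sum_congr rfl fun p _ => ?_
    have hcong : ∀ S ∈ Finset.univ.filter (fun S : Finset (Fin n) => S.card = p),
        (n.choose S.card : ℝ) * (γ₁ ^ (2 * S.card) * γ₂ ^ (2 * (n - S.card)))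
          = (n.choose p : ℝ) * (γ₁ ^ (2 * p) * γ₂ ^ (2 * (n - p))) := fun S hS => by
      rw [(Finset.mem_filter.mp hS).2]
    rw [Finset.sum_congr rfl hcong, Finset.sum_const, card_filter_card_eq p, nsmul_eq_mul]
  rw [hgroup]
  have key : ∀ p ∈ Finset.range (n + 1),
      (n.choose p : ℝ) * ((n.choose p : ℝ) * (γ₁ ^ (2 * p) * γ₂ ^ (2 * (n - p))))
        ≤ ((2 * n).choose (2 * p) : ℝ) * (γ₁ ^ (2 * p) * γ₂ ^ (2 * (n - p))) := by
    intro p _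
    have hch : n.choose p * n.choose p ≤ (2 * n).choose (2 * p) := by
      rw [two_mul, two_mul, Nat.add_choose_eq]
      exact Finset.single_le_sum (f := fun ij : ℕ × ℕ => n.choose ij.1 * n.choose ij.2)
        (fun i _ => Nat.zero_le _) (a := (p, p)) (Finset.HasAntidiagonal.mem_antidiagonal.mpr rfl)
    calc (n.choose p : ℝ) * ((n.choose p : ℝ) * (γ₁ ^ (2 * p) * γ₂ ^ (2 * (n - p))))
        = ((n.choose p * n.choose p : ℕ) : ℝ) * (γ₁ ^ (2 * p) * γ₂ ^ (2 * (n - p))) := by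
          push_cast; ring
      _ ≤ _ := by
          apply mul_le_mul_of_nonneg_right _
            (mul_nonneg (pow_nonneg hγ₁ _) (pow_nonneg hγ₂ _))
          exact_mod_cast hch
  refine (Finset.sum_le_sum key).trans ?_
  have hrw : ∀ p ∈ Finset.range (n + 1),
      ((2 * n).choose (2 * p) : ℝ) * (γ₁ ^ (2 * p) * γ₂ ^ (2 * (n - p)))
        = γ₁ ^ (2 * p) * γ₂ ^ (2 * n - 2 * p) * ((2 * n).choose (2 * p) : ℝ) := by
    intro p hp
    have h2np : 2 * (n - p) = 2 * n - 2 * p := by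
      have := Finset.mem_range.mp hp; omega
    rw [h2np]; ring
  rw [Finset.sum_congr rfl hrw]
  have himg : (∑ p ∈ Finset.range (n + 1),
        γ₁ ^ (2 * p) * γ₂ ^ (2 * n - 2 * p) * ((2 * n).choose (2 * p) : ℝ))
      = ∑ k ∈ (Finset.range (n + 1)).image (fun p => 2 * p),
          γ₁ ^ k * γ₂ ^ (2 * n - k) * ((2 * n).choose k : ℝ) := by
    rw [Finset.sum_image (fun x _ y _ h => by omega)]
  rw [himg]
  have hsub : (Finset.range (n + 1)).image (fun p => 2 * p) ⊆ Finset.range (2 * n + 1) := by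
    intro k hk
    simp only [Finset.mem_image, Finset.mem_range] at hk ⊢
    obtain ⟨p, hp, rfl⟩ := hk; omega
  refine (Finset.sum_le_sum_of_subset_of_nonneg hsub (fun k _ _ =>
    mul_nonneg (mul_nonneg (pow_nonneg hγ₁ _) (pow_nonneg hγ₂ _)) (Nat.cast_nonneg _))).trans ?_
  exact le_of_eq (add_pow γ₁ γ₂ (2 * n)).symm
end

section
/- Let $t_1, \dots, t_{n-1} \in [0,1]$. Then there exist unit vectors $u_1, \dots, u_n \in \mathbb{R}^n$ such that for all $1 \le j < k \le n$, $\langle u_j, u_k \rangle = \prod_{i=j}^{k-1} t_i$. -/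
/-- Given `t₁, …, t_{n-1} ∈ [0,1]`, there exist unit vectors `u₁, …, u_n ∈ ℝⁿ` with
`⟨u_j, u_k⟩ = ∏_{i=j}^{k-1} t_i` for all `1 ≤ j < k ≤ n`. -/
theorem exists_unit_vectors_inner_eq_prod (n : ℕ) (hn : 1 ≤ n) (t : ℕ → ℝ)
    (ht : ∀ i, 1 ≤ i → i ≤ n - 1 → t i ∈ Set.Icc (0 : ℝ) 1) :
    ∃ u : ℕ → EuclideanSpace ℝ (Fin n),
      (∀ j, 1 ≤ j → j ≤ n → ‖u j‖ = 1) ∧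
      (∀ j k, 1 ≤ j → j < k → k ≤ n →
        (inner ℝ (u j) (u k) : ℝ) = ∏ i ∈ Finset.Ico j k, t i) := by
  classical
  set s : ℕ → ℝ := fun m => if m = 0 then 1 else Real.sqrt (1 - t m ^ 2) with hs
  have hsq : ∀ m, 1 ≤ m → m ≤ n - 1 → s m ^ 2 = 1 - t m ^ 2 := by
    intro m h1 h2
    have hm := ht m h1 h2
    have h0 : (0:ℝ) ≤ 1 - t m ^ 2 := by nlinarith [hm.1, hm.2]
    have : m ≠ 0 := by omega
    simp [hs, this, Real.sq_sqrt h0]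
  -- the norm-squared sums
  have hNorm : ∀ j, 1 ≤ j → j ≤ n →
      (∑ m ∈ Finset.range j, s m ^ 2 * (∏ i ∈ Finset.Ico (m + 1) j, t i) ^ 2) = 1 := by
    intro j
    induction j with
    | zero => omega
    | succ j ih =>
      intro _ hjn
      rcases Nat.eq_zero_or_pos j with hj0 | hj1
      · subst hj0; simp [hs]
      · have hNj := ih hj1 (by omega)
        have hst : s j ^ 2 = 1 - t j ^ 2 := hsq j hj1 (by omega)
        rw [Finset.sum_range_succ]
        have hcong : ∀ m ∈ Finset.range j,
            s m ^ 2 * (∏ i ∈ Finset.Ico (m + 1) (j + 1), t i) ^ 2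
            = (s m ^ 2 * (∏ i ∈ Finset.Ico (m + 1) j, t i) ^ 2) * t j ^ 2 := by
          intro m hm
          rw [Finset.prod_Ico_succ_top (by simp at hm; omega : m + 1 ≤ j)]
          ring
        rw [Finset.sum_congr rfl hcong, ← Finset.sum_mul, hNj]
        simp [hst]
  set u : ℕ → EuclideanSpace ℝ (Fin n) :=
    fun j => WithLp.toLp 2 fun m => if (m : ℕ) + 1 ≤ j then s m * ∏ i ∈ Finset.Ico ((m : ℕ) + 1) j, t i else 0
    with hu
  -- general inner product formula
  have hInner : ∀ j k, 1 ≤ j → j ≤ k → k ≤ n →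
      (inner ℝ (u j) (u k) : ℝ) = ∏ i ∈ Finset.Ico j k, t i := by
    intro j k h1 hjk hkn
    have : (inner ℝ (u j) (u k) : ℝ) = ∑ m : Fin n, u j m * u k m := by
      simp [PiLp.inner_apply, RCLike.inner_apply, mul_comm]
    rw [this]
    have hterm : ∀ m : Fin n, u j m * u k m =
        if (m : ℕ) + 1 ≤ j then
          (s (m : ℕ) ^ 2 * (∏ i ∈ Finset.Ico ((m : ℕ) + 1) j, t i) ^ 2)
            * ∏ i ∈ Finset.Ico j k, t i
        else 0 := by
      intro m
      simp only [hu, PiLp.toLp_apply]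
      by_cases h : (m : ℕ) + 1 ≤ j
      · rw [if_pos h, if_pos h, if_pos (by omega : (m : ℕ) + 1 ≤ k),
          ← Finset.prod_Ico_consecutive t h hjk]
        ring
      · rw [if_neg h, if_neg h, zero_mul]
    rw [Finset.sum_congr rfl (fun m _ => hterm m), Fin.sum_univ_eq_sum_range
      (fun m => if m + 1 ≤ j then
        (s m ^ 2 * (∏ i ∈ Finset.Ico (m + 1) j, t i) ^ 2) * ∏ i ∈ Finset.Ico j k, t i else 0)]
    rw [← Finset.sum_subset (Finset.range_subset_range.mpr (le_trans hjk hkn))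
      (fun x _ hx => by rw [if_neg (by simp at hx ⊢; omega)])]
    rw [Finset.sum_congr rfl (fun m hm => if_pos (by simp at hm; omega)),
      ← Finset.sum_mul, hNorm j h1 (le_trans hjk hkn), one_mul]
  refine ⟨u, ?_, fun j k h1 h2 h3 => hInner j k h1 (le_of_lt h2) h3⟩
  intro j h1 h2
  have h := hInner j j h1 le_rfl h2
  simp only [Finset.Ico_self, Finset.prod_empty] at h
  have hn' : ‖u j‖ * ‖u j‖ = 1 := by rw [← real_inner_self_eq_norm_mul_norm, h]
  nlinarith [norm_nonneg (u j)]
end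

section
/- Let $H$ and $O$ be Hermitian operators on a finite-dimensional Hilbert space and $\beta > 0$. Then the function $\lambda \mapsto \log \mathrm{Tr}(e^{-\beta(H + \lambda O)})$ is differentiable at $\lambda = 0$ with derivative $-\beta\, \mathrm{Tr}(O e^{-\beta H}) / \mathrm{Tr}(e^{-\beta H})$. -/
open NormedSpace Nat
open scoped Matrix

section Aux

variable {n : Type*} [Fintype n] [DecidableEq n]

attribute [local instance] Matrix.linftyOpSemiNormedRing Matrix.linftyOpNormedRing
  Matrix.linftyOpNormedAlgebra

private lemma norm_diag_le_aux (M : Matrix n n ℂ) (i : n) : ‖M i i‖ ≤ ‖M‖ := by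
  have h1 : ‖M i i‖₊ ≤ ∑ j, ‖M i j‖₊ :=
    Finset.single_le_sum (f := fun j => ‖M i j‖₊) (fun _ _ => by positivity) (Finset.mem_univ i)
  have h2 : (∑ j, ‖M i j‖₊) ≤ ‖M‖₊ := by
    rw [Matrix.linfty_opNNNorm_def]
    exact Finset.le_sup (f := fun i : n => ∑ j, ‖M i j‖₊) (Finset.mem_univ i)
  exact_mod_cast h1.trans h2

private lemma norm_trace_le_aux (M : Matrix n n ℂ) :
    ‖M.trace‖ ≤ (Fintype.card n : ℝ) * ‖M‖ := by
  calc ‖M.trace‖ ≤ ∑ i, ‖M i i‖ := norm_sum_le _ _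
    _ ≤ ∑ _i : n, ‖M‖ := Finset.sum_le_sum fun i _ => norm_diag_le_aux M i
    _ = (Fintype.card n : ℝ) * ‖M‖ := by
        simp [Finset.sum_const, nsmul_eq_mul]

/-- trace as a continuous `ℝ`-linear map (w.r.t. the linfty operator norm). -/
private noncomputable def traceCLM : Matrix n n ℂ →L[ℝ] ℂ :=
  LinearMap.mkContinuous (Matrix.traceLinearMap n ℝ ℂ) (Fintype.card n) norm_trace_le_aux

private lemma hasDerivAt_affine_aux (A B : Matrix n n ℂ) (l : ℝ) :
    HasDerivAt (fun t : ℝ => A + (t : ℂ) • B) B l := by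
  have he : (fun t : ℝ => A + (t : ℂ) • B) = fun t : ℝ => A + t • B := by
    funext t
    have : (t : ℂ) • B = t • B := by
      ext i j
      simp [Matrix.smul_apply, Complex.real_smul]
    rw [this]
  rw [he]
  have h := ((hasDerivAt_id l).smul_const B).const_add A
  rw [one_smul] at h
  exact h

private lemma hasDerivAt_pow_aux (A B : Matrix n n ℂ) (k : ℕ) (l : ℝ) :
    HasDerivAt (fun t : ℝ => (A + (t : ℂ) • B) ^ k)
      (∑ j ∈ Finset.range k,
        (A + (l : ℂ) • B) ^ j * B * (A + (l : ℂ) • B) ^ (k - 1 - j)) l := by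
  induction k with
  | zero =>
    simp only [pow_zero, Finset.range_zero, Finset.sum_empty]
    exact hasDerivAt_const l (1 : Matrix n n ℂ)
  | succ k ih =>
    have h := ih.mul (hasDerivAt_affine_aux A B l)
    set M := A + (l : ℂ) • B with hM
    have hfun : (fun t : ℝ => (A + (t : ℂ) • B) ^ k * (A + (t : ℂ) • B))
        = fun t : ℝ => (A + (t : ℂ) • B) ^ (k + 1) := by
      funext t; rw [pow_succ]
    rw [show ((fun t : ℝ => (A + (t : ℂ) • B) ^ k) * fun t : ℝ => A + (t : ℂ) • B)
        = fun t : ℝ => (A + (t : ℂ) • B) ^ k * (A + (t : ℂ) • B) from rfl, hfun] at h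
    have he : (∑ j ∈ Finset.range (k + 1), M ^ j * B * M ^ (k + 1 - 1 - j))
        = (∑ j ∈ Finset.range k, M ^ j * B * M ^ (k - 1 - j)) * M + M ^ k * B := by
      rw [Finset.sum_range_succ, Finset.sum_mul]
      congr 1
      · refine Finset.sum_congr rfl fun j hj => ?_
        have hj' : j < k := Finset.mem_range.mp hj
        rw [show k + 1 - 1 - j = (k - 1 - j) + 1 by omega, pow_succ, ← mul_assoc]
      · simp
    rw [he]
    exact h

private lemma trace_derivSum_aux (M B : Matrix n n ℂ) (k : ℕ) :
    (∑ j ∈ Finset.range k, M ^ j * B * M ^ (k - 1 - j)).trace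
      = (k : ℂ) * (B * M ^ (k - 1)).trace := by
  rw [Matrix.trace_sum]
  have hterm : ∀ j ∈ Finset.range k,
      (M ^ j * B * M ^ (k - 1 - j)).trace = (B * M ^ (k - 1)).trace := by
    intro j hj
    have hj' : j < k := Finset.mem_range.mp hj
    rw [mul_assoc, Matrix.trace_mul_comm, mul_assoc, ← pow_add,
      show k - 1 - j + j = k - 1 by omega]
  rw [Finset.sum_congr rfl hterm, Finset.sum_const, Finset.card_range, nsmul_eq_mul]

/-- Key analytic lemma: the derivative of `t ↦ Tr exp(A + t B)` at `0` is `Tr (B exp A)`. -/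
private lemma hasDerivAt_trace_exp_aux [Nonempty n] (A B : Matrix n n ℂ) :
    HasDerivAt (fun t : ℝ => (exp (A + (t : ℂ) • B)).trace)
      ((B * exp A).trace) 0 := by
  set C : ℝ := ‖A‖ + ‖B‖ with hC
  have hC0 : 0 ≤ C := add_nonneg (norm_nonneg _) (norm_nonneg _)
  set g : ℕ → ℝ → ℂ := fun k t => (k ! : ℂ)⁻¹ * ((A + (t : ℂ) • B) ^ k).trace with hg
  set g' : ℕ → ℝ → ℂ :=
    fun k t => (k ! : ℂ)⁻¹ * ((k : ℂ) * (B * (A + (t : ℂ) • B) ^ (k - 1)).trace) with hg'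
  set u : ℕ → ℝ :=
    fun k => (Fintype.card n : ℝ) * ‖B‖ * ((k : ℝ) * (1 + C) ^ k / k !) with hu
  -- summability of the bound
  have hu_sum : Summable u := by
    apply Summable.mul_left
    have h0 : Summable (fun k : ℕ => (1 + C) * ((1 + C) ^ k / k !)) :=
      (Real.summable_pow_div_factorial (1 + C)).mul_left _
    have h1 : (fun k : ℕ => ((k + 1 : ℕ) : ℝ) * (1 + C) ^ (k + 1) / (k + 1)!)
        = fun k : ℕ => (1 + C) * ((1 + C) ^ k / k !) := by
      funext k
      have hk : ((k + 1 : ℕ) : ℝ) ≠ 0 := by positivity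
      have hf : ((k + 1)! : ℝ) = ((k + 1 : ℕ) : ℝ) * (k ! : ℝ) := by
        rw [Nat.factorial_succ]; push_cast; ring
      have hfk : (k ! : ℝ) ≠ 0 := by positivity
      rw [hf, mul_div_mul_left _ _ hk, pow_succ]
      ring
    refine (summable_nat_add_iff 1).mp ?_
    exact h0.congr fun k => (congrFun h1 k).symm
  -- the matrix bound
  have hMnorm : ∀ t : ℝ, t ∈ Metric.ball (0 : ℝ) 1 → ‖A + (t : ℂ) • B‖ ≤ C := by
    intro t ht
    have h1 : ‖(t : ℂ) • B‖ ≤ ‖B‖ := by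
      rw [norm_smul]
      have : ‖(t : ℂ)‖ ≤ 1 := by
        rw [Complex.norm_real]
        simpa [Real.dist_eq] using (Metric.mem_ball.mp ht).le
      calc ‖(t : ℂ)‖ * ‖B‖ ≤ 1 * ‖B‖ := by
            exact mul_le_mul_of_nonneg_right this (norm_nonneg _)
        _ = ‖B‖ := one_mul _
    calc ‖A + (t : ℂ) • B‖ ≤ ‖A‖ + ‖(t : ℂ) • B‖ := norm_add_le _ _
      _ ≤ ‖A‖ + ‖B‖ := by linarith
  -- derivatives of the terms
  have hgd : ∀ k (t : ℝ), t ∈ Metric.ball (0 : ℝ) 1 → HasDerivAt (g k) (g' k t) t := by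
    intro k t _
    have hpow := hasDerivAt_pow_aux A B k t
    have hcomp := (traceCLM (n := n)).hasFDerivAt.comp_hasDerivAt t hpow
    have htr : (traceCLM (n := n))
        (∑ j ∈ Finset.range k,
          (A + (t : ℂ) • B) ^ j * B * (A + (t : ℂ) • B) ^ (k - 1 - j))
        = (k : ℂ) * (B * (A + (t : ℂ) • B) ^ (k - 1)).trace := trace_derivSum_aux _ _ _
    exact (hcomp.congr_deriv htr).const_mul ((k ! : ℂ)⁻¹)
  -- the bound on the derivatives
  have hbound : ∀ k (t : ℝ), t ∈ Metric.ball (0 : ℝ) 1 → ‖g' k t‖ ≤ u k := by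
    intro k t ht
    set M := A + (t : ℂ) • B with hM
    have hMC : ‖M‖ ≤ C := hMnorm t ht
    have h1 : ‖(B * M ^ (k - 1)).trace‖
        ≤ (Fintype.card n : ℝ) * (‖B‖ * (1 + C) ^ k) := by
      refine (norm_trace_le_aux _).trans ?_
      have h2 : ‖B * M ^ (k - 1)‖ ≤ ‖B‖ * (1 + C) ^ k := by
        refine (norm_mul_le _ _).trans ?_
        have h3 : ‖M ^ (k - 1)‖ ≤ (1 + C) ^ k := by
          refine (norm_pow_le M (k - 1)).trans ?_
          calc ‖M‖ ^ (k - 1) ≤ (1 + C) ^ (k - 1) :=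
                pow_le_pow_left₀ (norm_nonneg _) (by linarith) _
            _ ≤ (1 + C) ^ k := pow_le_pow_right₀ (by linarith) (Nat.sub_le k 1)
        exact mul_le_mul_of_nonneg_left h3 (norm_nonneg _)
      exact mul_le_mul_of_nonneg_left h2 (by positivity)
    have hkfac : ‖((k ! : ℂ))⁻¹‖ = (k ! : ℝ)⁻¹ := by
      rw [norm_inv]
      norm_cast
    calc ‖g' k t‖ = (k ! : ℝ)⁻¹ * ((k : ℝ) * ‖(B * M ^ (k - 1)).trace‖) := by
          rw [hg']
          simp only [norm_mul, hkfac, Complex.norm_natCast]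
          rfl
      _ ≤ (k ! : ℝ)⁻¹ * ((k : ℝ) * ((Fintype.card n : ℝ) * (‖B‖ * (1 + C) ^ k))) := by
          refine mul_le_mul_of_nonneg_left ?_ (by positivity)
          exact mul_le_mul_of_nonneg_left h1 (by positivity)
      _ = u k := by rw [hu]; field_simp
  -- summability at the base point
  have hg0 : Summable fun k => g k 0 := by
    refine Summable.of_norm_bounded
      (g := fun k => (Fintype.card n : ℝ) * (‖A‖ ^ k / k !)) ?_ ?_
    · exact (Real.summable_pow_div_factorial ‖A‖).mul_left _
    · intro k
      have hkfac : ‖((k ! : ℂ))⁻¹‖ = (k ! : ℝ)⁻¹ := by rw [norm_inv]; norm_cast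
      calc ‖g k 0‖ = (k ! : ℝ)⁻¹ * ‖((A + ((0 : ℝ) : ℂ) • B) ^ k).trace‖ := by
            rw [hg]; simp only [norm_mul, hkfac]
        _ ≤ (k ! : ℝ)⁻¹ * ((Fintype.card n : ℝ) * ‖(A + ((0 : ℝ) : ℂ) • B) ^ k‖) := by
            exact mul_le_mul_of_nonneg_left (norm_trace_le_aux _) (by positivity)
        _ ≤ (k ! : ℝ)⁻¹ * ((Fintype.card n : ℝ) * ‖A‖ ^ k) := by
            refine mul_le_mul_of_nonneg_left
              (mul_le_mul_of_nonneg_left ?_ (by positivity)) (by positivity)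
            refine (norm_pow_le _ k).trans ?_
            refine pow_le_pow_left₀ (norm_nonneg _) ?_ _
            simp
        _ = (Fintype.card n : ℝ) * (‖A‖ ^ k / k !) := by rw [div_eq_mul_inv]; ring
  -- apply the series differentiation theorem
  have hmain : HasDerivAt (fun z : ℝ => ∑' k, g k z) (∑' k, g' k 0) 0 := by
    refine hasDerivAt_tsum_of_isPreconnected hu_sum Metric.isOpen_ball
      (convex_ball (0 : ℝ) 1).isPreconnected hgd hbound
      (Metric.mem_ball_self one_pos) hg0 (Metric.mem_ball_self one_pos)
  -- identify the function
  have hfun : (fun z : ℝ => ∑' k, g k z)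
      = fun t : ℝ => (exp (A + (t : ℂ) • B)).trace := by
    funext z
    rw [exp_eq_tsum ℂ]
    have hsum : Summable fun k : ℕ => (k !⁻¹ : ℂ) • (A + (z : ℂ) • B) ^ k :=
      expSeries_summable' (𝕂 := ℂ) (A + (z : ℂ) • B)
    rw [show (∑' k : ℕ, (k !⁻¹ : ℂ) • (A + (z : ℂ) • B) ^ k).trace
        = (traceCLM (n := n)) (∑' k : ℕ, (k !⁻¹ : ℂ) • (A + (z : ℂ) • B) ^ k) from rfl,
      (traceCLM (n := n)).map_tsum hsum]
    refine tsum_congr fun k => ?_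
    show (k ! : ℂ)⁻¹ * ((A + (z : ℂ) • B) ^ k).trace
        = ((k !⁻¹ : ℂ) • (A + (z : ℂ) • B) ^ k).trace
    rw [Matrix.trace_smul, smul_eq_mul]
  -- identify the derivative
  have hderiv : (∑' k, g' k 0) = (B * exp A).trace := by
    have hg'sum : Summable fun k => g' k 0 :=
      Summable.of_norm_bounded hu_sum fun k => hbound k 0 (Metric.mem_ball_self one_pos)
    rw [Summable.tsum_eq_zero_add hg'sum]
    have hzero : g' 0 0 = 0 := by simp [hg']
    rw [hzero, zero_add]
    have hterm : ∀ k : ℕ, g' (k + 1) 0 = (k ! : ℂ)⁻¹ * (B * A ^ k).trace := by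
      intro k
      rw [hg']
      simp only [Complex.ofReal_zero, zero_smul, add_zero]
      simp only [Nat.add_sub_cancel]
      have hfac : ((k + 1)! : ℂ) = ((k : ℂ) + 1) * (k ! : ℂ) := by
        rw [Nat.factorial_succ]; push_cast; ring
      have hk1 : ((k : ℂ) + 1) ≠ 0 := by
        exact_mod_cast Nat.cast_add_one_ne_zero (R := ℂ) k
      have hkfac : ((k ! : ℂ)) ≠ 0 := by
        exact_mod_cast Nat.cast_ne_zero.mpr (Nat.factorial_ne_zero k)
      rw [hfac]
      push_cast
      field_simp
    rw [tsum_congr hterm]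
    -- now compute Tr (B * exp A)
    have hsum : Summable fun k : ℕ => (k !⁻¹ : ℂ) • A ^ k := expSeries_summable' (𝕂 := ℂ) A
    have hmul : Summable fun k : ℕ => B * ((k !⁻¹ : ℂ) • A ^ k) := by
      have := (ContinuousLinearMap.mul ℂ (Matrix n n ℂ) B).summable hsum
      exact this
    rw [exp_eq_tsum ℂ]
    have hBtsum : B * (∑' k : ℕ, (k !⁻¹ : ℂ) • A ^ k)
        = ∑' k : ℕ, B * ((k !⁻¹ : ℂ) • A ^ k) := by
      have := (ContinuousLinearMap.mul ℂ (Matrix n n ℂ) B).map_tsum hsum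
      exact this
    rw [hBtsum,
      show (∑' k : ℕ, B * ((k !⁻¹ : ℂ) • A ^ k)).trace
        = (traceCLM (n := n)) (∑' k : ℕ, B * ((k !⁻¹ : ℂ) • A ^ k)) from rfl,
      (traceCLM (n := n)).map_tsum hmul]
    refine tsum_congr fun k => ?_
    show (k ! : ℂ)⁻¹ * (B * A ^ k).trace = (B * ((k !⁻¹ : ℂ) • A ^ k)).trace
    rw [mul_smul_comm, Matrix.trace_smul, smul_eq_mul]
  rw [hfun, hderiv] at hmain
  exact hmain

/-- Positivity of `Re Tr exp A` for Hermitian `A`. -/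
private lemma trace_exp_re_pos_aux [Nonempty n] (A : Matrix n n ℂ) (hA : A.IsHermitian) :
    0 < ((exp A).trace).re := by
  have hhalf : A = (1 / 2 : ℝ) • A + (1 / 2 : ℝ) • A := by
    rw [← add_smul]
    norm_num
  have hAh : ((1 / 2 : ℝ) • A).IsHermitian := by
    unfold Matrix.IsHermitian at hA ⊢
    rw [Matrix.conjTranspose_smul, hA, star_trivial]
  set M := exp ((1 / 2 : ℝ) • A) with hMdef
  have hMher : M.IsHermitian := hAh.exp
  have hexp : exp A = M * M := by
    conv_lhs => rw [hhalf]
    exact Matrix.exp_add_of_commute _ _ (Commute.refl _)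
  have hMunit : IsUnit M := Matrix.isUnit_exp ((1 / 2 : ℝ) • A)
  have hMne : M ≠ 0 := hMunit.ne_zero
  obtain ⟨i0, j0, hij⟩ : ∃ i j, M i j ≠ 0 := by
    by_contra h
    push_neg at h
    exact hMne (by ext i j; simpa using h i j)
  have htr : ((M * M).trace).re = ∑ i, ∑ j, Complex.normSq (M i j) := by
    have hMM : M * M = M * Mᴴ := congrArg (fun X => M * X) hMher.eq.symm
    rw [hMM]
    simp only [Matrix.trace, Matrix.diag, Matrix.mul_apply, Matrix.conjTranspose_apply,
      Complex.star_def, Complex.mul_conj, Complex.re_sum, Complex.ofReal_re]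
  rw [hexp, htr]
  refine Finset.sum_pos' (fun i _ => Finset.sum_nonneg fun j _ => Complex.normSq_nonneg _)
    ⟨i0, Finset.mem_univ _, ?_⟩
  refine Finset.sum_pos' (fun j _ => Complex.normSq_nonneg _)
    ⟨j0, Finset.mem_univ _, Complex.normSq_pos.mpr hij⟩

end Aux

/-- For Hermitian `H`, `O` and `β > 0`, the map `λ ↦ log Tr(e^{-β(H+λO)})` is differentiable
at `λ = 0` with derivative `-β Tr(O e^{-βH}) / Tr(e^{-βH})`. -/
theorem hasDerivAt_log_trace_exp (N : ℕ) (H O : Matrix (Fin N) (Fin N) ℂ)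
    (hH : H.IsHermitian) (hO : O.IsHermitian) (β : ℝ) (hβ : 0 < β) :
    HasDerivAt
      (fun l : ℝ => Real.log (Matrix.trace (exp ((-(β : ℂ)) • (H + (l : ℂ) • O)))).re)
      (-β * (Matrix.trace (O * exp ((-(β : ℂ)) • H))).re /
        (Matrix.trace (exp ((-(β : ℂ)) • H))).re) 0 := by
  rcases Nat.eq_zero_or_pos N with hN | hN
  · -- degenerate case `N = 0`
    subst hN
    have htr0 : ∀ M : Matrix (Fin 0) (Fin 0) ℂ, M.trace = 0 := fun M => by
      simp [Matrix.trace]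
    have hfun : (fun l : ℝ =>
        Real.log (Matrix.trace (exp ((-(β : ℂ)) • (H + (l : ℂ) • O)))).re)
        = fun _ : ℝ => Real.log 0 := by
      funext l; rw [htr0]; simp
    rw [hfun, htr0, htr0]
    simpa using hasDerivAt_const (0 : ℝ) (Real.log 0)
  · have : Nonempty (Fin N) := ⟨⟨0, hN⟩⟩
    set A : Matrix (Fin N) (Fin N) ℂ := (-(β : ℂ)) • H with hAdef
    set B : Matrix (Fin N) (Fin N) ℂ := (-(β : ℂ)) • O with hBdef
    have hrw : ∀ l : ℝ, (-(β : ℂ)) • (H + (l : ℂ) • O) = A + (l : ℂ) • B := by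
      intro l
      rw [smul_add, hAdef, hBdef, smul_comm]
    have hAh : A.IsHermitian := by
      unfold Matrix.IsHermitian at hH ⊢
      rw [hAdef, Matrix.conjTranspose_smul, hH]
      congr 1
      simp [star, Complex.ext_iff]
    have hf := hasDerivAt_trace_exp_aux A B
    have hre : HasDerivAt (fun t : ℝ => ((exp (A + (t : ℂ) • B)).trace).re)
        (((B * exp A).trace).re) 0 :=
      Complex.reCLM.hasFDerivAt.comp_hasDerivAt 0 hf
    have hpos : 0 < ((exp A).trace).re := trace_exp_re_pos_aux A hAh
    have h0 : ((exp (A + ((0 : ℝ) : ℂ) • B)).trace).re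
        = ((exp A).trace).re := by norm_num
    have hlog := hre.log (by rw [h0]; exact ne_of_gt hpos)
    rw [h0] at hlog
    have hfun : (fun l : ℝ =>
        Real.log (Matrix.trace (exp ((-(β : ℂ)) • (H + (l : ℂ) • O)))).re)
        = fun t : ℝ => Real.log ((exp (A + (t : ℂ) • B)).trace).re := by
      funext l; rw [hrw l]
    rw [hfun]
    have hval : ((B * exp A).trace).re = -β * ((O * exp A).trace).re := by
      rw [hBdef, Matrix.smul_mul, Matrix.trace_smul, smul_eq_mul,
        show (-(β : ℂ)) = ((-β : ℝ) : ℂ) from by push_cast; ring, Complex.re_ofReal_mul]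
    rw [show -β * ((O * exp A).trace).re = ((B * exp A).trace).re from hval.symm]
    exact hlog
end

section
/- Let $z \in \mathbb{C}$, let $h$ be an $N \times N$ Hermitian matrix indexed by a finite metric space $(\Omega, d)$, and let $\theta > 0$. Fix $x_0 \in \Omega$ and let $U_\theta$ be the diagonal matrix with entries $(U_\theta)_{xx} = e^{\theta d(x, x_0)}$. Set $h_\theta = U_\theta h U_\theta^{-1}$. Suppose $\delta := \mathrm{dist}(z, \sigma(h)) > \|h_\theta - h\|$, where $\sigma(h)$ is the spectrum of $h$. Then $zI - h_\theta$ is invertible and for every $y \in \Omega$, $|((zI - h)^{-1})_{x_0 y}| \le \frac{e^{-\theta d(y, x_0)}}{\delta - \|h_\theta - h\|}$. -/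
open Matrix Pointwise

set_option maxHeartbeats 1000000
set_option synthInstance.maxHeartbeats 400000

-- entry bound
lemma entry_abs_le_norm {Ω : Type*} [Fintype Ω] [DecidableEq Ω] (M : Matrix Ω Ω ℂ) (x y : Ω) :
    ‖M x y‖ ≤ ‖Matrix.toEuclideanCLM (𝕜 := ℂ) M‖ := by
  have hv : ‖(EuclideanSpace.single y (1:ℂ))‖ = 1 := by
    simp [EuclideanSpace.norm_single]
  have happ : (Matrix.toEuclideanCLM (𝕜 := ℂ) M (EuclideanSpace.single y (1:ℂ))) x = M x y := by
    have : (EuclideanSpace.single y (1:ℂ)) = WithLp.toLp 2 (Pi.single y 1) := rfl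
    rw [this, Matrix.toEuclideanCLM_toLp]
    simp [Matrix.toLin'_apply, Matrix.mulVec_single]
  have h1 : ‖M x y‖ ≤ ‖Matrix.toEuclideanCLM (𝕜 := ℂ) M (EuclideanSpace.single y (1:ℂ))‖ := by
    rw [← happ]
    have := EuclideanSpace.inner_single_left (𝕜 := ℂ) x 1
      (Matrix.toEuclideanCLM (𝕜 := ℂ) M (EuclideanSpace.single y (1:ℂ)))
    calc ‖(Matrix.toEuclideanCLM (𝕜 := ℂ) M (EuclideanSpace.single y (1:ℂ))) x‖
        = ‖(inner ℂ (EuclideanSpace.single x (1:ℂ))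
            (Matrix.toEuclideanCLM (𝕜 := ℂ) M (EuclideanSpace.single y (1:ℂ))) : ℂ)‖ := by
          rw [this]; simp
      _ ≤ _ := by
          refine (norm_inner_le_norm _ _).trans ?_
          simp [EuclideanSpace.norm_single]
  calc ‖M x y‖ ≤ _ := h1
    _ ≤ ‖Matrix.toEuclideanCLM (𝕜 := ℂ) M‖ * ‖(EuclideanSpace.single y (1:ℂ))‖ :=
        (Matrix.toEuclideanCLM (𝕜 := ℂ) M).le_opNorm _
    _ = ‖Matrix.toEuclideanCLM (𝕜 := ℂ) M‖ := by rw [hv, mul_one]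

lemma selfAdjoint_resolvent_bound {A : Type*} [CStarAlgebra A] (a : A) (ha : IsSelfAdjoint a)
    (z : ℂ) (hδ : 0 < Metric.infDist z (spectrum ℂ a)) :
    IsUnit (z • (1 : A) - a) ∧
      ‖Ring.inverse (z • (1 : A) - a)‖ ≤ (Metric.infDist z (spectrum ℂ a))⁻¹ := by
  set δ := Metric.infDist z (spectrum ℂ a) with hδdef
  have hz : z ∉ spectrum ℂ a := fun hz => by
    simp [hδdef, Metric.infDist_zero_of_mem hz] at hδ
  have halg : algebraMap ℂ A z = z • (1 : A) := Algebra.algebraMap_eq_smul_one z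
  have hu : IsUnit (z • (1 : A) - a) := halg ▸ spectrum.notMem_iff.mp hz
  refine ⟨hu, ?_⟩
  set c := z • (1 : A) - a with hc
  -- star c
  have hstarc : star c = (starRingEnd ℂ z) • (1 : A) - a := by
    rw [hc, star_sub, star_smul, star_one, ha.star_eq]; rfl
  -- commute c (star c)
  have hcomm : Commute c (star c) := by
    rw [hc, hstarc]
    simp only [Commute, SemiconjBy, sub_mul, mul_sub, smul_mul_assoc, mul_smul_comm,
      one_mul, mul_one, smul_smul]
    simp only [smul_sub, smul_smul, mul_comm z ((starRingEnd ℂ) z)]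
    abel
  -- b normal
  set b := Ring.inverse c with hb
  have hstarb : star b = Ring.inverse (star c) := (Ring.inverse_star c).symm
  have hnormal : IsStarNormal b :=
    ⟨by rw [hstarb, hb]; exact (hcomm.ringInverse_ringInverse).symm⟩
  have hrad : (‖b‖₊ : ENNReal) = spectralRadius ℂ b :=
    (IsStarNormal.spectralRadius_eq_nnnorm b).symm
  -- spectrum of b
  have hspec : spectrum ℂ b = (spectrum ℂ c)⁻¹ := by
    rw [hb, ← hu.unit_spec, Ring.inverse_unit, ← spectrum.map_inv]
  -- bound each element
  have hbound : ∀ k ∈ spectrum ℂ b, ‖k‖ ≤ δ⁻¹ := by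
    intro k hk
    rw [hspec, Set.mem_inv] at hk
    have hkc : k⁻¹ ∈ spectrum ℂ c := hk
    have hmem : k⁻¹ ∈ ({z} : Set ℂ) - spectrum ℂ a := by
      rw [spectrum.singleton_sub_eq]
      rw [halg]; exact hkc
    obtain ⟨zz, hzz, lam, hlam, hzl⟩ := hmem
    rw [Set.mem_singleton_iff] at hzz
    rw [hzz] at hzl
    have hdist : δ ≤ ‖z - lam‖ := by
      simpa [Complex.dist_eq] using Metric.infDist_le_dist_of_mem hlam
    have hk0 : k = (z - lam)⁻¹ := by
      have : z - lam = k⁻¹ := hzl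
      rw [this, inv_inv]
    rw [hk0, norm_inv]
    exact inv_anti₀ hδ hdist
  have : (‖b‖₊ : ENNReal) ≤ ENNReal.ofReal δ⁻¹ := by
    rw [hrad, spectralRadius]
    refine iSup₂_le fun k hk => ?_
    have := hbound k hk
    rw [show ((‖k‖₊ : ENNReal)) = ENNReal.ofReal ‖k‖ from (ofReal_norm k).symm]
    exact ENNReal.ofReal_le_ofReal this
  have h2 : ‖b‖ ≤ δ⁻¹ := by
    have := ENNReal.toReal_mono (by simp) this
    simpa [ENNReal.toReal_ofReal (le_of_lt (inv_pos.mpr hδ))] using this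
  exact h2

lemma neumann_resolvent_bound {A : Type*} [NormedRing A] [CompleteSpace A] (c p : A)
    (hu : IsUnit c) {δ : ℝ} (hδ : 0 < δ) (hbc : ‖Ring.inverse c‖ ≤ δ⁻¹) (hp : ‖p‖ < δ) :
    IsUnit (c - p) ∧ ‖Ring.inverse (c - p)‖ ≤ (δ - ‖p‖)⁻¹ := by
  set b := Ring.inverse c with hbdef
  have hbc1 : b * c = 1 := Ring.inverse_mul_cancel c hu
  have hcb1 : c * b = 1 := Ring.mul_inverse_cancel c hu
  have ht : ‖b * p‖ < 1 := by
    calc ‖b * p‖ ≤ ‖b‖ * ‖p‖ := norm_mul_le _ _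
      _ ≤ δ⁻¹ * ‖p‖ := by gcongr
      _ < δ⁻¹ * δ := mul_lt_mul_of_pos_left hp (inv_pos.mpr hδ)
      _ = 1 := inv_mul_cancel₀ (ne_of_gt hδ)
  set v := Units.oneSub (b * p) ht with hv
  have hcp : c - p = c * ↑v := by
    rw [hv, Units.val_oneSub, mul_sub, mul_one, ← mul_assoc, hcb1, one_mul]
  have hunit : IsUnit (c - p) := by
    rw [hcp]; exact hu.mul v.isUnit
  refine ⟨hunit, ?_⟩
  set R := Ring.inverse (c - p) with hR
  have hRid : (c - p) * R = 1 := Ring.mul_inverse_cancel _ hunit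
  have hkey : R = b + b * (p * R) := by
    have h1 : c * R = 1 + p * R := by
      have := hRid
      rw [sub_mul] at this
      linear_combination (norm := noncomm_ring) this
    calc R = (b * c) * R := by rw [hbc1, one_mul]
      _ = b * (c * R) := by rw [mul_assoc]
      _ = b * (1 + p * R) := by rw [h1]
      _ = b + b * (p * R) := by rw [mul_add, mul_one]
  have hnorm : ‖R‖ ≤ δ⁻¹ + δ⁻¹ * (‖p‖ * ‖R‖) := by
    calc ‖R‖ = ‖b + b * (p * R)‖ := by rw [← hkey]
      _ ≤ ‖b‖ + ‖b‖ * ‖p * R‖ := le_trans (norm_add_le _ _) (by gcongr; exact norm_mul_le _ _)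
      _ ≤ δ⁻¹ + δ⁻¹ * (‖p‖ * ‖R‖) := by
          have hpr : ‖p * R‖ ≤ ‖p‖ * ‖R‖ := norm_mul_le _ _
          have hb0 : ‖b‖ ≤ δ⁻¹ := hbc
          nlinarith [mul_le_mul hb0 hpr (norm_nonneg _) (le_of_lt (inv_pos.mpr hδ)),
            norm_nonneg b, norm_nonneg (p * R)]
  have hδe : 0 < δ - ‖p‖ := by linarith
  have h2 : ‖R‖ * (δ - ‖p‖) ≤ 1 := by
    have e1 : δ * ‖R‖ ≤ δ * (δ⁻¹ + δ⁻¹ * (‖p‖ * ‖R‖)) :=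
      mul_le_mul_of_nonneg_left hnorm hδ.le
    have e2 : δ * (δ⁻¹ + δ⁻¹ * (‖p‖ * ‖R‖)) = 1 + ‖p‖ * ‖R‖ := by
      field_simp
    nlinarith [e1, e2]
  calc ‖R‖ = ‖R‖ * (δ - ‖p‖) * (δ - ‖p‖)⁻¹ := by field_simp
    _ ≤ 1 * (δ - ‖p‖)⁻¹ := by gcongr
    _ = (δ - ‖p‖)⁻¹ := one_mul _


/-- Combes–Thomas type bound: conjugating by the exponential weight
`U_θ = diag(e^{θ d(x,x₀)})`, if `δ = dist(z, σ(h))` exceeds `‖h_θ - h‖`, then `zI - h_θ` is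
invertible and the resolvent entries decay as
`|((zI-h)⁻¹)_{x₀ y}| ≤ e^{-θ d(y,x₀)} / (δ - ‖h_θ - h‖)`. -/
theorem resolvent_exponential_decay {Ω : Type*} [Fintype Ω] [DecidableEq Ω] [MetricSpace Ω]
    (z : ℂ) (h : Matrix Ω Ω ℂ) (hh : h.IsHermitian) (θ : ℝ) (hθ : 0 < θ) (x₀ : Ω) :
    let U : Matrix Ω Ω ℂ := Matrix.diagonal fun x => (Real.exp (θ * dist x x₀) : ℂ)
    let hθm : Matrix Ω Ω ℂ := U * h * U⁻¹
    let δ : ℝ := Metric.infDist z (spectrum ℂ h)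
    ‖Matrix.toEuclideanCLM (𝕜 := ℂ) (hθm - h)‖ < δ →
      (IsUnit (z • (1 : Matrix Ω Ω ℂ) - hθm) ∧
       ∀ y : Ω, ‖((z • (1 : Matrix Ω Ω ℂ) - h)⁻¹) x₀ y‖
          ≤ Real.exp (-θ * dist y x₀) /
            (δ - ‖Matrix.toEuclideanCLM (𝕜 := ℂ) (hθm - h)‖)) := by
  intro U hθm δ hlt
  set φ := (Matrix.toEuclideanCLM (𝕜 := ℂ) (n := Ω)) with hφ
  set ε := ‖φ (hθm - h)‖ with hεdef
  have hδpos : 0 < δ := lt_of_le_of_lt (norm_nonneg _) hlt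
  -- U is invertible
  have hUdet : IsUnit U.det := by
    rw [show U = Matrix.diagonal fun x => (Real.exp (θ * dist x x₀) : ℂ) from rfl,
      Matrix.det_diagonal, isUnit_iff_ne_zero]
    exact Finset.prod_ne_zero_iff.mpr fun x _ =>
      Complex.ofReal_ne_zero.mpr (Real.exp_ne_zero _)
  have hUU : U * U⁻¹ = 1 := Matrix.mul_nonsing_inv U hUdet
  have hUUi : U⁻¹ * U = 1 := Matrix.nonsing_inv_mul U hUdet
  have hUinv_eq : U⁻¹ = Matrix.diagonal fun x => ((Real.exp (θ * dist x x₀) : ℂ))⁻¹ :=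
    Matrix.inv_eq_right_inv (by
      rw [show U = Matrix.diagonal fun x => (Real.exp (θ * dist x x₀) : ℂ) from rfl,
        Matrix.diagonal_mul_diagonal, ← Matrix.diagonal_one]
      exact congrArg Matrix.diagonal (funext fun x =>
        mul_inv_cancel₀ (Complex.ofReal_ne_zero.mpr (Real.exp_ne_zero _))))
  -- the oppositely-conjugated matrix
  set h' : Matrix Ω Ω ℂ := U⁻¹ * h * U with hh'
  -- h' - h = star (hθm - h)
  have hstar : h' - h = star (hθm - h) := by
    rw [Matrix.star_eq_conjTranspose, conjTranspose_sub, hh.eq]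
    congr 1
    show h' = (U * h * U⁻¹)ᴴ
    rw [conjTranspose_mul, conjTranspose_mul]
    have hdiagstar : ∀ v : Ω → ℂ, (∀ x, star (v x) = v x) →
        (Matrix.diagonal v)ᴴ = Matrix.diagonal v := by
      intro v hv
      rw [Matrix.diagonal_conjTranspose]
      exact congrArg Matrix.diagonal (funext fun x => hv x)
    have hUct : Uᴴ = U := hdiagstar _ fun x => by rw [RCLike.star_def, Complex.conj_ofReal]
    have hUict : (U⁻¹)ᴴ = U⁻¹ := by
      rw [hUinv_eq]
      refine hdiagstar _ fun x => ?_
      rw [star_inv₀, RCLike.star_def, Complex.conj_ofReal]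
    rw [hUct, hUict, hh.eq, hh', Matrix.mul_assoc]
  have hnormp : ‖φ (h' - h)‖ = ε := by
    rw [hstar, map_star, hεdef, ContinuousLinearMap.star_eq_adjoint]
    exact LinearIsometryEquiv.norm_map ContinuousLinearMap.adjoint (φ (hθm - h))
  -- selfadjointness and spectrum transfer
  have ha : IsSelfAdjoint (φ h) := by
    show star (φ h) = φ h
    rw [← map_star]
    exact congrArg φ hh.isSelfAdjoint
  have hspec : spectrum ℂ (φ h) = spectrum ℂ h := AlgEquiv.spectrum_eq φ h
  have hδeq : Metric.infDist z (spectrum ℂ (φ h)) = δ := by rw [hspec]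
  -- resolvent bound for φ h
  obtain ⟨hu_a, hb_a⟩ := selfAdjoint_resolvent_bound (φ h) ha z (hδeq ▸ hδpos)
  rw [hδeq] at hb_a
  have hmap1 : φ (z • (1 : Matrix Ω Ω ℂ) - h) = z • 1 - φ h := by
    rw [_root_.map_sub, _root_.map_smul, _root_.map_one]
  -- IsUnit of z•1 - h as a matrix
  have hu_m : IsUnit (z • (1 : Matrix Ω Ω ℂ) - h) := by
    have h1 := hu_a.map (StarAlgEquiv.symm φ)
    rwa [_root_.map_sub, _root_.map_smul, _root_.map_one,
      StarAlgEquiv.symm_apply_apply] at h1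
  -- Neumann step on the CLM side
  have hpnorm : ‖φ (h' - h)‖ < δ := by rw [hnormp]; exact hlt
  obtain ⟨hu_cp, hb_cp⟩ := neumann_resolvent_bound (φ (z • (1 : Matrix Ω Ω ℂ) - h)) (φ (h' - h))
    (by rw [hmap1]; exact hu_a) hδpos (by rw [hmap1]; exact hb_a) hpnorm
  rw [hnormp] at hb_cp
  have hcp_eq : φ (z • (1 : Matrix Ω Ω ℂ) - h) - φ (h' - h)
      = φ (z • (1 : Matrix Ω Ω ℂ) - h') := by
    rw [← _root_.map_sub]; congr 1; abel
  rw [hcp_eq] at hu_cp hb_cp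
  -- the inverse of z•1 - h' as a matrix
  set M : Matrix Ω Ω ℂ := StarAlgEquiv.symm φ (Ring.inverse (φ (z • (1 : Matrix Ω Ω ℂ) - h'))) with hM
  have hMr : (z • (1 : Matrix Ω Ω ℂ) - h') * M = 1 := by
    apply EquivLike.injective φ
    rw [_root_.map_mul, _root_.map_one, hM, StarAlgEquiv.apply_symm_apply]
    exact Ring.mul_inverse_cancel _ hu_cp
  have hMinv : (z • (1 : Matrix Ω Ω ℂ) - h')⁻¹ = M := Matrix.inv_eq_right_inv hMr
  have hφM : ‖φ M‖ ≤ (δ - ε)⁻¹ := by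
    rw [hM, StarAlgEquiv.apply_symm_apply]; exact hb_cp
  -- conjugation identities
  have hconj2 : z • (1 : Matrix Ω Ω ℂ) - hθm = U * (z • (1 : Matrix Ω Ω ℂ) - h) * U⁻¹ := by
    rw [mul_sub, sub_mul, mul_smul_comm, smul_mul_assoc, mul_one, hUU]
  have hUu : IsUnit U := (Matrix.isUnit_iff_isUnit_det U).mpr hUdet
  have hUiu : IsUnit U⁻¹ :=
    (Matrix.isUnit_iff_isUnit_det U⁻¹).mpr (Matrix.isUnit_nonsing_inv_det U hUdet)
  constructor
  · rw [hconj2]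
    exact (hUu.mul hu_m).mul hUiu
  intro y
  have h2 : z • (1 : Matrix Ω Ω ℂ) - h = U * (z • (1 : Matrix Ω Ω ℂ) - h') * U⁻¹ := by
    rw [hh']
    simp only [mul_sub, sub_mul, mul_smul_comm, smul_mul_assoc, Matrix.mul_one, mul_one,
      Matrix.mul_assoc, hUU]
    rw [← Matrix.mul_assoc, hUU, Matrix.one_mul]
  have hGinv : (z • (1 : Matrix Ω Ω ℂ) - h)⁻¹ = U * (M * U⁻¹) := by
    rw [h2, Matrix.mul_inv_rev, Matrix.mul_inv_rev,
      Matrix.nonsing_inv_nonsing_inv U hUdet, hMinv]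
  have hentry : ((z • (1 : Matrix Ω Ω ℂ) - h)⁻¹) x₀ y
      = (Real.exp (θ * dist x₀ x₀) : ℂ) * (M x₀ y * ((Real.exp (θ * dist y x₀) : ℂ))⁻¹) := by
    rw [hGinv, hUinv_eq,
      show U = Matrix.diagonal fun x => (Real.exp (θ * dist x x₀) : ℂ) from rfl,
      Matrix.diagonal_mul, Matrix.mul_diagonal]
  have hMy : ‖M x₀ y‖ ≤ (δ - ε)⁻¹ :=
    le_trans (entry_abs_le_norm M x₀ y) hφM
  rw [hentry, dist_self, mul_zero, Real.exp_zero, Complex.ofReal_one, one_mul]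
  rw [norm_mul, norm_inv, Complex.norm_real, Real.norm_eq_abs, abs_of_pos (Real.exp_pos _)]
  have hexp : Real.exp (-θ * dist y x₀) = (Real.exp (θ * dist y x₀))⁻¹ := by
    rw [← Real.exp_neg]; ring_nf
  rw [div_eq_mul_inv, hexp]
  calc ‖M x₀ y‖ * (Real.exp (θ * dist y x₀))⁻¹
      ≤ (δ - ε)⁻¹ * (Real.exp (θ * dist y x₀))⁻¹ :=
        mul_le_mul_of_nonneg_right hMy (by positivity)
    _ = (Real.exp (θ * dist y x₀))⁻¹ * (δ - ε)⁻¹ := mul_comm _ _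
end
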